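/- arXiv:2306.04981 — 2 statements merged into one kernel-verified Lean document; each statement's English description precedes it below -/
import Mathlib

section
/- (Properties of T(L) across regimes.) The target-loss function T(L) satisfies: (1) T(L) = +∞ (infeasible) for 0 ≤ L < L_min; (2) the problem is feasible and T(L) < ∞ for all L ≥ L_min; (3) T is continuous on [L_min, ∞); (4) T is strictly decreasing on [L_min, L_max], and on this interval the optimum is attained with the loss constraint holding with equality; (5) for L ≥ L_Max the loss constraint is vacuous, so T(L) = T(L_Max) for all L ≥ L_Max. -/
open Real

noncomputable section

variable {V U W : Type*} [Fintype V] [Fintype U] [Fintype W]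
  [DecidableEq V] [DecidableEq U]

/-- `q(u|v)` is a conditional distribution supported on the edge set `E`. -/
def CondDistOn (E : Finset (V × U)) (q : V → U → ℝ) : Prop :=
  (∀ v u, 0 ≤ q v u) ∧ (∀ v, ∑ u, q v u = 1) ∧ (∀ v u, q v u ≠ 0 → (v, u) ∈ E)

/-- Generalized K-L divergence `GD_E(q‖r)`. -/
def GDE (E : Finset (V × U)) (p : V → ℝ) (pw : V → U → W → ℝ)
    (q : V → U → ℝ) (r : W → U → ℝ) : ℝ :=
  ∑ v, ∑ u, ∑ w, if (v, u) ∈ E then p v * q v u * pw v u w * Real.log (q v u / r w u) else 0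

/-- Expected loss `Loss(q) = Σ p(v) q(u|v) ℓ̃(v,u)`. -/
def LossE (E : Finset (V × U)) (p : V → ℝ) (lt : V → U → ℝ) (q : V → U → ℝ) : ℝ :=
  ∑ v, ∑ u, if (v, u) ∈ E then p v * q v u * lt v u else 0

/-- The joint distribution `p(v,u,w) = p(v) q(u|v) p(w|u,v)`. -/
def jointD (E : Finset (V × U)) (p : V → ℝ) (pw : V → U → W → ℝ) (q : V → U → ℝ)
    (v : V) (u : U) (w : W) : ℝ :=
  if (v, u) ∈ E then p v * q v u * pw v u w else 0

/-- Marginal `p(u)`. -/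
def margU (p : V → ℝ) (q : V → U → ℝ) (u : U) : ℝ := ∑ v, p v * q v u

/-- Marginal `p(u,w)`. -/
def margUW (E : Finset (V × U)) (p : V → ℝ) (pw : V → U → W → ℝ) (q : V → U → ℝ)
    (u : U) (w : W) : ℝ := ∑ v, jointD E p pw q v u w

/-- Marginal `p(w)`. -/
def margW (E : Finset (V × U)) (p : V → ℝ) (pw : V → U → W → ℝ) (q : V → U → ℝ)
    (w : W) : ℝ := ∑ u, margUW E p pw q u w

/-- Mutual information `I(U;V)`. -/
def IUV (p : V → ℝ) (q : V → U → ℝ) : ℝ :=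
  ∑ v, ∑ u, p v * q v u * Real.log (q v u / margU p q u)

/-- Mutual information `I(U;W)`. -/
def IUW (E : Finset (V × U)) (p : V → ℝ) (pw : V → U → W → ℝ) (q : V → U → ℝ) : ℝ :=
  ∑ u, ∑ w, margUW E p pw q u w *
    Real.log (margUW E p pw q u w / (margU p q u * margW E p pw q w))

/-- Objective `I(U;V) - I(U;W)`. -/
def Obj (E : Finset (V × U)) (p : V → ℝ) (pw : V → U → W → ℝ) (q : V → U → ℝ) : ℝ :=
  IUV p q - IUW E p pw q

/-- The induced conditional distribution `r*(q)(u|w)`. -/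
def rstar (E : Finset (V × U)) (p : V → ℝ) (pw : V → U → W → ℝ) (q : V → U → ℝ)
    (w : W) (u : U) : ℝ := margUW E p pw q u w / margW E p pw q w

/-- Gibbs update `q_s^*(r)(u|v)`. -/
def qstar (E : Finset (V × U)) (pw : V → U → W → ℝ) (lt : V → U → ℝ)
    (s : ℝ) (r : W → U → ℝ) (v : V) (u : U) : ℝ :=
  (if (v, u) ∈ E then Real.exp (-s * lt v u) * ∏ w', r w' u ^ pw v u w' else 0) /
  (∑ u', if (v, u') ∈ E then Real.exp (-s * lt v u') * ∏ w', r w' u' ^ pw v u' w' else 0)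

/-- The penalty (Lagrangian) function `F_s(q,r)`. -/
def FPen (E : Finset (V × U)) (p : V → ℝ) (pw : V → U → W → ℝ) (lt : V → U → ℝ)
    (s : ℝ) (q : V → U → ℝ) (r : W → U → ℝ) : ℝ :=
  GDE E p pw q r + s * LossE E p lt q

/-- Generalized K-L divergence between two conditional distributions on `E`. -/
def GDcond (E : Finset (V × U)) (p : V → ℝ) (q1 q2 : V → U → ℝ) : ℝ :=
  ∑ v, ∑ u, if (v, u) ∈ E then p v * q1 v u * Real.log (q1 v u / q2 v u) else 0

/-- Conditional K-L divergence `GD_q(r1‖r2)` weighted by `q(w)`. -/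
def GDr (E : Finset (V × U)) (p : V → ℝ) (pw : V → U → W → ℝ) (q : V → U → ℝ)
    (r1 r2 : W → U → ℝ) : ℝ :=
  ∑ u, ∑ w, margW E p pw q w * r1 w u * Real.log (r1 w u / r2 w u)

/-- The target-loss function `T(L)` (valued in `EReal`, `+∞` if infeasible). -/
def TL (E : Finset (V × U)) (p : V → ℝ) (pw : V → U → W → ℝ) (lt : V → U → ℝ)
    (L : ℝ) : EReal :=
  sInf {x : EReal | ∃ q, CondDistOn E q ∧ LossE E p lt q ≤ L ∧ x = (Obj E p pw q : EReal)}


set_option linter.unusedSectionVars false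
namespace TLaux


lemma log_ge_one_sub_inv {z : ℝ} (hz : 0 < z) : 1 - 1/z ≤ Real.log z := by
  have h := Real.log_le_sub_one_of_pos (show (0:ℝ) < 1/z by positivity)
  rw [Real.log_div one_ne_zero hz.ne'] at h
  rw [one_div]
  simp at h
  linarith

/-- tangent line bound: for x ≥ 0, y > 0, X > 0, Y > 0. -/
lemma tangent {x y X Y : ℝ} (hx : 0 ≤ x) (hy : 0 < y) (hX : 0 < X) (hY : 0 < Y) :
    x * Real.log (X / Y) + x - y * (X / Y) ≤ x * Real.log (x / y) := by
  rcases eq_or_lt_of_le hx with h | h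
  · rw [← h]
    have : 0 ≤ y * (X/Y) := by positivity
    simp
    linarith
  · have hz : 0 < (x / y) / (X / Y) := by positivity
    have h1 : 1 - 1/((x / y) / (X / Y)) ≤ Real.log ((x / y) / (X / Y)) := log_ge_one_sub_inv hz
    have h2 : Real.log ((x / y) / (X / Y)) = Real.log (x/y) - Real.log (X/Y) := by
      rw [Real.log_div (by positivity) (by positivity)]
    rw [h2] at h1
    have h3 : x * (1 - 1/((x / y) / (X / Y))) ≤ x * (Real.log (x/y) - Real.log (X/Y)) :=
      mul_le_mul_of_nonneg_left h1 hx
    have h4 : x * (1 - 1/((x / y) / (X / Y))) = x - y * (X/Y) := by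
      field_simp
    nlinarith [h3, h4]

lemma alogab_ge {a b : ℝ} (ha : 0 ≤ a) (hb : 0 < b) : a - b ≤ a * Real.log (a / b) := by
  rcases eq_or_lt_of_le ha with h | h
  · simp [← h]; linarith
  · have h1 : 1 - 1/(a/b) ≤ Real.log (a/b) := log_ge_one_sub_inv (by positivity)
    have h3 := mul_le_mul_of_nonneg_left h1 ha
    have h4 : a * (1 - 1/(a/b)) = a - b := by field_simp
    linarith

lemma logsum2 {x₀ x₁ y₀ y₁ : ℝ} (hx0 : 0 ≤ x₀) (hx1 : 0 ≤ x₁) (hy0 : 0 < y₀) (hy1 : 0 < y₁) :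
    (x₀ + x₁) * Real.log ((x₀ + x₁) / (y₀ + y₁)) ≤ x₀ * Real.log (x₀ / y₀) + x₁ * Real.log (x₁ / y₁) := by
  set X := x₀ + x₁ with hX
  set Y := y₀ + y₁ with hY
  have hYpos : 0 < Y := by positivity
  rcases eq_or_lt_of_le (show 0 ≤ X by positivity) with h | hXpos
  · have h0 : x₀ = 0 := by linarith
    have h1 : x₁ = 0 := by linarith
    simp [← h, h0, h1]
  · have t0 := tangent hx0 hy0 hXpos hYpos
    have t1 := tangent hx1 hy1 hXpos hYpos
    have : X * Real.log (X/Y) + X - Y * (X/Y) ≤ x₀ * Real.log (x₀ / y₀) + x₁ * Real.log (x₁ / y₁) := by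
      linarith [t0, t1, show X * Real.log (X/Y) + X - Y * (X/Y) = (x₀ * Real.log (X/Y) + x₀ - y₀ * (X/Y)) + (x₁ * Real.log (X/Y) + x₁ - y₁ * (X/Y)) by rw [hX, hY]; ring]
    have hYXY : Y * (X/Y) = X := by field_simp
    linarith

lemma alog_convex {a₀ a₁ b₀ b₁ t : ℝ} (ha₀ : 0 ≤ a₀) (ha₁ : 0 ≤ a₁) (hb₀ : 0 < b₀) (hb₁ : 0 < b₁)
    (ht0 : 0 ≤ t) (ht1 : t ≤ 1) :
    ((1-t)*a₀ + t*a₁) * Real.log (((1-t)*a₀ + t*a₁) / ((1-t)*b₀ + t*b₁)) ≤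
      (1-t) * (a₀ * Real.log (a₀ / b₀)) + t * (a₁ * Real.log (a₁ / b₁)) := by
  rcases eq_or_lt_of_le ht0 with h | ht0'
  · simp [← h]
  rcases eq_or_lt_of_le ht1 with h | ht1'
  · simp [h]
  have h2 := logsum2 (x₀ := (1-t)*a₀) (x₁ := t*a₁) (y₀ := (1-t)*b₀) (y₁ := t*b₁)
    (mul_nonneg (by linarith) ha₀) (mul_nonneg ht0 ha₁)
    (mul_pos (by linarith : (0:ℝ) < 1 - t) hb₀) (mul_pos ht0' hb₁)
  have e0 : ((1-t)*a₀) / ((1-t)*b₀) = a₀ / b₀ := mul_div_mul_left _ _ (by linarith)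
  have e1 : (t*a₁) / (t*b₁) = a₁ / b₁ := mul_div_mul_left _ _ (by linarith)
  rw [e0, e1] at h2
  calc ((1-t)*a₀ + t*a₁) * Real.log (((1-t)*a₀ + t*a₁) / ((1-t)*b₀ + t*b₁))
      ≤ (1-t)*a₀ * Real.log (a₀/b₀) + t*a₁ * Real.log (a₁/b₁) := h2
    _ = (1-t) * (a₀ * Real.log (a₀ / b₀)) + t * (a₁ * Real.log (a₁ / b₁)) := by ring



/-- continuity of (a,b) ↦ a log(a/b) on the region 0 ≤ a ≤ K b -/
lemma hcont {K : ℝ} (hK : 0 < K) :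
    ContinuousOn (fun x : ℝ × ℝ => x.1 * Real.log (x.1 / x.2))
      {x : ℝ × ℝ | 0 ≤ x.1 ∧ x.1 ≤ K * x.2} := by
  set D : Set (ℝ × ℝ) := {x : ℝ × ℝ | 0 ≤ x.1 ∧ x.1 ≤ K * x.2} with hD
  have hDb : ∀ x ∈ D, 0 ≤ x.2 := by
    rintro x ⟨h1, h2⟩
    nlinarith
  -- on D, f agrees with g
  have key : ∀ x ∈ D, x.1 * Real.log (x.1 / x.2) = x.1 * Real.log x.1 - x.1 * Real.log x.2 := by
    rintro x ⟨h1, h2⟩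
    rcases eq_or_lt_of_le h1 with h | h
    · simp [← h]
    · have hb : 0 < x.2 := by nlinarith
      rw [Real.log_div h.ne' hb.ne']
      ring
  intro z hz
  rcases eq_or_lt_of_le (hDb z hz) with hb0 | hbpos
  · -- z.2 = 0, hence z.1 = 0 : squeeze
    have hz1 : z.1 = 0 := le_antisymm (by nlinarith [hz.1, hz.2, hb0]) hz.1
    have hval : z.1 * Real.log (z.1 / z.2) = 0 := by simp [hz1]
    rw [ContinuousWithinAt, hval]
    have hbound : ∀ x ∈ D, |x.1 * Real.log (x.1 / x.2)| ≤
        |x.1 * Real.log x.1| + K * |x.2 * Real.log x.2| := by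
      rintro x ⟨h1, h2⟩
      rw [key x ⟨h1, h2⟩]
      refine (abs_sub _ _).trans ?_
      gcongr
      rw [abs_mul, abs_mul]
      calc |x.1| * |Real.log x.2| ≤ (K * |x.2|) * |Real.log x.2| := by
            gcongr
            rw [abs_of_nonneg h1]
            calc x.1 ≤ K * x.2 := h2
              _ ≤ K * |x.2| := by gcongr; exact le_abs_self _
        _ = K * (|x.2| * |Real.log x.2|) := by ring
    have htend : Filter.Tendsto (fun x : ℝ × ℝ => |x.1 * Real.log x.1| + K * |x.2 * Real.log x.2|)
        (nhdsWithin z D) (nhds 0) := by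
      have hc : Continuous (fun x : ℝ × ℝ => |x.1 * Real.log x.1| + K * |x.2 * Real.log x.2|) := by
        have h1 : Continuous fun x : ℝ × ℝ => x.1 * Real.log x.1 :=
          Real.continuous_mul_log.comp continuous_fst
        have h2 : Continuous fun x : ℝ × ℝ => x.2 * Real.log x.2 :=
          Real.continuous_mul_log.comp continuous_snd
        exact h1.abs.add (continuous_const.mul h2.abs)
      have := hc.continuousWithinAt (s := D) (x := z)
      rw [ContinuousWithinAt] at this
      convert this using 2
      simp [hz1, ← hb0]
    refine squeeze_zero_norm' ?_ htend
    filter_upwards [self_mem_nhdsWithin] with x hx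
    exact hbound x hx
  · -- z.2 > 0
    have hg : ContinuousWithinAt (fun x : ℝ × ℝ => x.1 * Real.log x.1 - x.1 * Real.log x.2) D z := by
      apply ContinuousWithinAt.sub
      · exact (Real.continuous_mul_log.comp continuous_fst).continuousWithinAt
      · exact ((continuous_fst.continuousAt).mul
          ((Real.continuousAt_log hbpos.ne').comp continuous_snd.continuousAt)).continuousWithinAt
    exact hg.congr key (key z hz)


variable (E : Finset (V × U)) (p : V → ℝ) (pw : V → U → W → ℝ) (lt : V → U → ℝ)


variable (E : Finset (V × U)) (p : V → ℝ) (pw : V → U → W → ℝ) (lt : V → U → ℝ)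

lemma q_zero {q : V → U → ℝ} (hq : CondDistOn E q) {v : V} {u : U} (h : (v,u) ∉ E) :
    q v u = 0 := by
  by_contra hne
  exact h (hq.2.2 v u hne)

lemma q_le_one {q : V → U → ℝ} (hq : CondDistOn E q) (v : V) (u : U) : q v u ≤ 1 := by
  calc q v u ≤ ∑ u', q v u' :=
        Finset.single_le_sum (fun i _ => hq.1 v i) (Finset.mem_univ u)
    _ = 1 := hq.2.1 v

lemma margU_nonneg (hp : ∀ v, 0 < p v) {q : V → U → ℝ} (hq : CondDistOn E q) (u : U) :
    0 ≤ margU p q u :=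
  Finset.sum_nonneg fun v _ => mul_nonneg (hp v).le (hq.1 v u)

lemma le_margU (hp : ∀ v, 0 < p v) {q : V → U → ℝ} (hq : CondDistOn E q) (v : V) (u : U) :
    p v * q v u ≤ margU p q u :=
  Finset.single_le_sum (f := fun v' => p v' * q v' u)
    (fun i _ => mul_nonneg (hp i).le (hq.1 i u)) (Finset.mem_univ v)

lemma jointD_nonneg (hp : ∀ v, 0 < p v) (hpw0 : ∀ v u w, 0 ≤ pw v u w)
    {q : V → U → ℝ} (hq : CondDistOn E q) (v : V) (u : U) (w : W) :
    0 ≤ jointD E p pw q v u w := by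
  unfold jointD
  split
  · exact mul_nonneg (mul_nonneg (hp v).le (hq.1 v u)) (hpw0 v u w)
  · exact le_refl 0

lemma margUW_nonneg (hp : ∀ v, 0 < p v) (hpw0 : ∀ v u w, 0 ≤ pw v u w)
    {q : V → U → ℝ} (hq : CondDistOn E q) (u : U) (w : W) :
    0 ≤ margUW E p pw q u w :=
  Finset.sum_nonneg fun v _ => jointD_nonneg E p pw hp hpw0 hq v u w

lemma margUW_le_margU (hp : ∀ v, 0 < p v) (hpw0 : ∀ v u w, 0 ≤ pw v u w)
    (hpw1 : ∀ v u, (v, u) ∈ E → ∑ w, pw v u w = 1)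
    {q : V → U → ℝ} (hq : CondDistOn E q) (u : U) (w : W) :
    margUW E p pw q u w ≤ margU p q u := by
  unfold margUW margU jointD
  refine Finset.sum_le_sum fun v _ => ?_
  split
  · rename_i h
    have hple : pw v u w ≤ 1 := by
      calc pw v u w ≤ ∑ w', pw v u w' :=
            Finset.single_le_sum (fun i _ => hpw0 v u i) (Finset.mem_univ w)
        _ = 1 := hpw1 v u h
    calc p v * q v u * pw v u w ≤ p v * q v u * 1 := by
          exact mul_le_mul_of_nonneg_left hple (mul_nonneg (hp v).le (hq.1 v u))
      _ = p v * q v u := mul_one _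
  · exact mul_nonneg (hp _).le (hq.1 _ u)

lemma margUW_le_margW (hp : ∀ v, 0 < p v) (hpw0 : ∀ v u w, 0 ≤ pw v u w)
    {q : V → U → ℝ} (hq : CondDistOn E q) (u : U) (w : W) :
    margUW E p pw q u w ≤ margW E p pw q w :=
  Finset.single_le_sum (f := fun u' => margUW E p pw q u' w)
    (fun i _ => margUW_nonneg E p pw hp hpw0 hq i w) (Finset.mem_univ u)

lemma margW_nonneg (hp : ∀ v, 0 < p v) (hpw0 : ∀ v u w, 0 ≤ pw v u w)
    {q : V → U → ℝ} (hq : CondDistOn E q) (w : W) :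
    0 ≤ margW E p pw q w :=
  Finset.sum_nonneg fun u _ => margUW_nonneg E p pw hp hpw0 hq u w

lemma sum_w_margUW (hpw1 : ∀ v u, (v, u) ∈ E → ∑ w, pw v u w = 1)
    {q : V → U → ℝ} (hq : CondDistOn E q) (u : U) :
    ∑ w, margUW E p pw q u w = margU p q u := by
  unfold margUW margU jointD
  rw [Finset.sum_comm]
  refine Finset.sum_congr rfl fun v _ => ?_
  by_cases h : (v, u) ∈ E
  · simp only [if_pos h, ← Finset.mul_sum, hpw1 v u h, mul_one]
  · simp only [if_neg h, Finset.sum_const_zero, q_zero E hq h, mul_zero]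

lemma sum_u_margU (hp1 : ∑ v, p v = 1) {q : V → U → ℝ} (hq : CondDistOn E q) :
    ∑ u, margU p q u = 1 := by
  unfold margU
  rw [Finset.sum_comm]
  calc ∑ v, ∑ u, p v * q v u = ∑ v, p v := by
        refine Finset.sum_congr rfl fun v _ => ?_
        rw [← Finset.mul_sum, hq.2.1 v, mul_one]
    _ = 1 := hp1

lemma sum_uw_margUW (hp1 : ∑ v, p v = 1) (hpw1 : ∀ v u, (v, u) ∈ E → ∑ w, pw v u w = 1)
    {q : V → U → ℝ} (hq : CondDistOn E q) :
    ∑ u, ∑ w, margUW E p pw q u w = 1 := by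
  calc ∑ u, ∑ w, margUW E p pw q u w = ∑ u, margU p q u :=
        Finset.sum_congr rfl fun u _ => sum_w_margUW E p pw hpw1 hq u
    _ = 1 := sum_u_margU E p hp1 hq


lemma loss_ge (hp : ∀ v, 0 < p v) (hne : ∀ v : V, (Finset.univ.filter (fun u => (v, u) ∈ E)).Nonempty)
    {q : V → U → ℝ} (hq : CondDistOn E q) :
    ∑ v, p v * (Finset.univ.filter (fun u => (v, u) ∈ E)).inf' (hne v) (fun u => lt v u)
      ≤ LossE E p lt q := by
  unfold LossE
  refine Finset.sum_le_sum fun v _ => ?_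
  set m := (Finset.univ.filter (fun u => (v, u) ∈ E)).inf' (hne v) (fun u => lt v u) with hm
  calc p v * m = ∑ u, p v * m * q v u := by
        rw [← Finset.mul_sum, hq.2.1 v, mul_one]
    _ ≤ ∑ u, (if (v, u) ∈ E then p v * q v u * lt v u else 0) := by
        refine Finset.sum_le_sum fun u _ => ?_
        by_cases h : (v, u) ∈ E
        · rw [if_pos h]
          have hmle : m ≤ lt v u :=
            Finset.inf'_le _ (Finset.mem_filter.mpr ⟨Finset.mem_univ u, h⟩)
          calc p v * m * q v u = (p v * q v u) * m := by ring
            _ ≤ (p v * q v u) * lt v u :=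
              mul_le_mul_of_nonneg_left hmle (mul_nonneg (hp v).le (hq.1 v u))
            _ = p v * q v u * lt v u := by ring
        · rw [if_neg h, q_zero E hq h, mul_zero]

lemma loss_le (hp : ∀ v, 0 < p v) (hne : ∀ v : V, (Finset.univ.filter (fun u => (v, u) ∈ E)).Nonempty)
    {q : V → U → ℝ} (hq : CondDistOn E q) :
    LossE E p lt q ≤
      ∑ v, p v * (Finset.univ.filter (fun u => (v, u) ∈ E)).sup' (hne v) (fun u => lt v u) := by
  unfold LossE
  refine Finset.sum_le_sum fun v _ => ?_
  set m := (Finset.univ.filter (fun u => (v, u) ∈ E)).sup' (hne v) (fun u => lt v u) with hm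
  calc ∑ u, (if (v, u) ∈ E then p v * q v u * lt v u else 0)
      ≤ ∑ u, p v * m * q v u := by
        refine Finset.sum_le_sum fun u _ => ?_
        by_cases h : (v, u) ∈ E
        · rw [if_pos h]
          have hmle : lt v u ≤ m :=
            Finset.le_sup' _ (Finset.mem_filter.mpr ⟨Finset.mem_univ u, h⟩)
          calc p v * q v u * lt v u ≤ (p v * q v u) * m :=
                mul_le_mul_of_nonneg_left hmle (mul_nonneg (hp v).le (hq.1 v u))
            _ = p v * m * q v u := by ring
        · rw [if_neg h, q_zero E hq h]
          simp
    _ = p v * m := by rw [← Finset.mul_sum, hq.2.1 v, mul_one]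

lemma exists_qmin (hne : ∀ v : V, (Finset.univ.filter (fun u => (v, u) ∈ E)).Nonempty) :
    ∃ q, CondDistOn E q ∧ LossE E p lt q =
      ∑ v, p v * (Finset.univ.filter (fun u => (v, u) ∈ E)).inf' (hne v) (fun u => lt v u) := by
  choose um hmem hval using fun v => Finset.exists_mem_eq_inf' (hne v) (fun u => lt v u)
  refine ⟨fun v u => if u = um v then 1 else 0, ⟨?_, ?_, ?_⟩, ?_⟩
  · intro v u; dsimp only; split <;> norm_num
  · intro v; simp
  · intro v u h
    have : u = um v := by by_contra hc; simp [hc] at h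
    subst this
    exact Finset.mem_filter.mp (hmem v) |>.2
  · unfold LossE
    refine Finset.sum_congr rfl fun v _ => ?_
    dsimp only
    rw [Finset.sum_eq_single (um v)]
    · rw [if_pos (Finset.mem_filter.mp (hmem v) |>.2), if_pos rfl, hval v]
      ring
    · intro u _ hu
      split
      · ring
      · rfl
    · intro h; exact absurd (Finset.mem_univ _) h

lemma Lrmin_nonneg (hp : ∀ v, 0 < p v) (hlt : ∀ v u, 0 ≤ lt v u)
    (hne : ∀ v : V, (Finset.univ.filter (fun u => (v, u) ∈ E)).Nonempty) :
    0 ≤ ∑ v, p v * (Finset.univ.filter (fun u => (v, u) ∈ E)).inf' (hne v) (fun u => lt v u) := by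
  refine Finset.sum_nonneg fun v _ => mul_nonneg (hp v).le ?_
  obtain ⟨u, hu, he⟩ := Finset.exists_mem_eq_inf' (hne v) (fun u => lt v u)
  rw [he]; exact hlt v u

variable {q : V → U → ℝ} {r : W → U → ℝ}

lemma obj_eq (hp : ∀ v, 0 < p v) (hpw0 : ∀ v u w, 0 ≤ pw v u w)
    (hpw1 : ∀ v u, (v, u) ∈ E → ∑ w, pw v u w = 1) (hq : CondDistOn E q) :
    Obj E p pw q = (∑ v, ∑ u, p v * q v u * Real.log (q v u))
      - ∑ u, ∑ w, margUW E p pw q u w *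
          Real.log (margUW E p pw q u w / margW E p pw q w) := by
  have hIUV : IUV p q = (∑ v, ∑ u, p v * q v u * Real.log (q v u))
      - ∑ u, margU p q u * Real.log (margU p q u) := by
    unfold IUV
    have per : ∀ v u, p v * q v u * Real.log (q v u / margU p q u)
        = p v * q v u * Real.log (q v u) - p v * q v u * Real.log (margU p q u) := by
      intro v u
      by_cases hz : q v u = 0
      · simp [hz]
      · have hq0 : 0 < q v u := lt_of_le_of_ne (hq.1 v u) (Ne.symm hz)
        have hmU : 0 < margU p q u :=
          lt_of_lt_of_le (mul_pos (hp v) hq0) (le_margU E p hp hq v u)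
        rw [Real.log_div hz hmU.ne']
        ring
    calc ∑ v, ∑ u, p v * q v u * Real.log (q v u / margU p q u)
        = ∑ v, ∑ u, (p v * q v u * Real.log (q v u) - p v * q v u * Real.log (margU p q u)) :=
          Finset.sum_congr rfl fun v _ => Finset.sum_congr rfl fun u _ => per v u
      _ = (∑ v, ∑ u, p v * q v u * Real.log (q v u))
          - ∑ v, ∑ u, p v * q v u * Real.log (margU p q u) := by
          rw [← Finset.sum_sub_distrib]
          exact Finset.sum_congr rfl fun v _ => by rw [← Finset.sum_sub_distrib]
      _ = (∑ v, ∑ u, p v * q v u * Real.log (q v u))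
          - ∑ u, margU p q u * Real.log (margU p q u) := by
          congr 1
          rw [Finset.sum_comm]
          refine Finset.sum_congr rfl fun u _ => ?_
          rw [margU, Finset.sum_mul]
  have hIUW : IUW E p pw q = (∑ u, ∑ w, margUW E p pw q u w *
        Real.log (margUW E p pw q u w / margW E p pw q w))
      - ∑ u, margU p q u * Real.log (margU p q u) := by
    unfold IUW
    have per : ∀ u w, margUW E p pw q u w *
          Real.log (margUW E p pw q u w / (margU p q u * margW E p pw q w))
        = margUW E p pw q u w * Real.log (margUW E p pw q u w / margW E p pw q w)
          - margUW E p pw q u w * Real.log (margU p q u) := by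
      intro u w
      by_cases hz : margUW E p pw q u w = 0
      · simp [hz]
      · have h1 : 0 < margUW E p pw q u w :=
          lt_of_le_of_ne (margUW_nonneg E p pw hp hpw0 hq u w) (Ne.symm hz)
        have h2 : 0 < margU p q u := lt_of_lt_of_le h1 (margUW_le_margU E p pw hp hpw0 hpw1 hq u w)
        have h3 : 0 < margW E p pw q w := lt_of_lt_of_le h1 (margUW_le_margW E p pw hp hpw0 hq u w)
        rw [Real.log_div hz (mul_ne_zero h2.ne' h3.ne'), Real.log_mul h2.ne' h3.ne',
          Real.log_div hz h3.ne']
        ring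
    calc ∑ u, ∑ w, margUW E p pw q u w *
          Real.log (margUW E p pw q u w / (margU p q u * margW E p pw q w))
        = ∑ u, ∑ w, (margUW E p pw q u w * Real.log (margUW E p pw q u w / margW E p pw q w)
            - margUW E p pw q u w * Real.log (margU p q u)) :=
          Finset.sum_congr rfl fun u _ => Finset.sum_congr rfl fun w _ => per u w
      _ = (∑ u, ∑ w, margUW E p pw q u w * Real.log (margUW E p pw q u w / margW E p pw q w))
          - ∑ u, ∑ w, margUW E p pw q u w * Real.log (margU p q u) := by
          rw [← Finset.sum_sub_distrib]
          exact Finset.sum_congr rfl fun u _ => by rw [← Finset.sum_sub_distrib]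
      _ = (∑ u, ∑ w, margUW E p pw q u w * Real.log (margUW E p pw q u w / margW E p pw q w))
          - ∑ u, margU p q u * Real.log (margU p q u) := by
          congr 1
          refine Finset.sum_congr rfl fun u _ => ?_
          rw [← Finset.sum_mul, sum_w_margUW E p pw hpw1 hq u]
  unfold Obj
  rw [hIUV, hIUW]
  ring

lemma GDE_eq (hpw1 : ∀ v u, (v, u) ∈ E → ∑ w, pw v u w = 1) (hq : CondDistOn E q)
    (hr : ∀ w u, 0 < r w u) :
    GDE E p pw q r = (∑ v, ∑ u, p v * q v u * Real.log (q v u))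
      - ∑ u, ∑ w, margUW E p pw q u w * Real.log (r w u) := by
  unfold GDE
  have per : ∀ v u w, (if (v, u) ∈ E then p v * q v u * pw v u w * Real.log (q v u / r w u) else 0)
      = (if (v, u) ∈ E then p v * q v u * pw v u w * Real.log (q v u) else 0)
        - jointD E p pw q v u w * Real.log (r w u) := by
    intro v u w
    unfold jointD
    by_cases h : (v, u) ∈ E
    · rw [if_pos h, if_pos h, if_pos h]
      by_cases hz : q v u = 0
      · simp [hz]
      · rw [Real.log_div hz (hr w u).ne']
        ring
    · simp [h]
  calc ∑ v, ∑ u, ∑ w, (if (v, u) ∈ E then p v * q v u * pw v u w * Real.log (q v u / r w u) else 0)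
      = ∑ v, ∑ u, ∑ w, ((if (v, u) ∈ E then p v * q v u * pw v u w * Real.log (q v u) else 0)
          - jointD E p pw q v u w * Real.log (r w u)) := by
        exact Finset.sum_congr rfl fun v _ => Finset.sum_congr rfl fun u _ =>
          Finset.sum_congr rfl fun w _ => per v u w
    _ = (∑ v, ∑ u, ∑ w, (if (v, u) ∈ E then p v * q v u * pw v u w * Real.log (q v u) else 0))
        - ∑ v, ∑ u, ∑ w, jointD E p pw q v u w * Real.log (r w u) := by
        rw [← Finset.sum_sub_distrib]
        refine Finset.sum_congr rfl fun v _ => ?_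
        rw [← Finset.sum_sub_distrib]
        refine Finset.sum_congr rfl fun u _ => ?_
        rw [← Finset.sum_sub_distrib]
    _ = (∑ v, ∑ u, p v * q v u * Real.log (q v u))
        - ∑ u, ∑ w, margUW E p pw q u w * Real.log (r w u) := by
        congr 1
        · refine Finset.sum_congr rfl fun v _ => Finset.sum_congr rfl fun u _ => ?_
          by_cases h : (v, u) ∈ E
          · simp only [if_pos h]
            have e : ∀ w, p v * q v u * pw v u w * Real.log (q v u)
                = (p v * q v u * Real.log (q v u)) * pw v u w := fun w => by ring
            rw [Finset.sum_congr rfl (fun w _ => e w), ← Finset.mul_sum, hpw1 v u h, mul_one]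
          · simp [h, q_zero E hq h]
        · rw [Finset.sum_comm]
          refine Finset.sum_congr rfl fun u _ => ?_
          rw [Finset.sum_comm]
          refine Finset.sum_congr rfl fun w _ => ?_
          rw [margUW, Finset.sum_mul]


lemma obj_le_GDE (hp : ∀ v, 0 < p v) (hpw0 : ∀ v u w, 0 ≤ pw v u w)
    (hpw1 : ∀ v u, (v, u) ∈ E → ∑ w, pw v u w = 1) (hq : CondDistOn E q)
    (hr : ∀ w u, 0 < r w u) (hr1 : ∀ w, ∑ u, r w u = 1) :
    Obj E p pw q ≤ GDE E p pw q r := by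
  rw [obj_eq E p pw hp hpw0 hpw1 hq, GDE_eq E p pw hpw1 hq hr]
  have keyw : ∀ w : W, ∑ u, margUW E p pw q u w * Real.log (r w u)
      ≤ ∑ u, margUW E p pw q u w * Real.log (margUW E p pw q u w / margW E p pw q w) := by
    intro w
    by_cases hW : margW E p pw q w = 0
    · have hz : ∀ u, margUW E p pw q u w = 0 := fun u =>
        le_antisymm (hW ▸ margUW_le_margW E p pw hp hpw0 hq u w)
          (margUW_nonneg E p pw hp hpw0 hq u w)
      simp [hz]
    · have hWpos : 0 < margW E p pw q w :=
        lt_of_le_of_ne (margW_nonneg E p pw hp hpw0 hq w) (Ne.symm hW)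
      have keyu : ∀ u : U, margUW E p pw q u w * Real.log (r w u)
          + (margUW E p pw q u w - margW E p pw q w * r w u)
          ≤ margUW E p pw q u w * Real.log (margUW E p pw q u w / margW E p pw q w) := by
        intro u
        by_cases hmu : margUW E p pw q u w = 0
        · rw [hmu]
          have h1 : 0 ≤ margW E p pw q w * r w u := mul_nonneg hWpos.le (hr w u).le
          simp
          linarith
        · have hmupos : 0 < margUW E p pw q u w :=
            lt_of_le_of_ne (margUW_nonneg E p pw hp hpw0 hq u w) (Ne.symm hmu)
          have hb : 0 < margW E p pw q w * r w u := mul_pos hWpos (hr w u)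
          have halog := alogab_ge hmupos.le hb
          have e : Real.log (margUW E p pw q u w / (margW E p pw q w * r w u))
              = Real.log (margUW E p pw q u w / margW E p pw q w) - Real.log (r w u) := by
            rw [Real.log_div hmu hb.ne', Real.log_div hmu hWpos.ne',
              Real.log_mul hWpos.ne' (hr w u).ne']
            ring
          rw [e, mul_sub] at halog
          linarith
      calc ∑ u, margUW E p pw q u w * Real.log (r w u)
          = ∑ u, (margUW E p pw q u w * Real.log (r w u)
              + (margUW E p pw q u w - margW E p pw q w * r w u)) := by
            rw [Finset.sum_add_distrib, Finset.sum_sub_distrib, ← Finset.mul_sum, hr1 w]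
            rw [show (∑ u, margUW E p pw q u w) = margW E p pw q w from rfl]
            ring
        _ ≤ ∑ u, margUW E p pw q u w * Real.log (margUW E p pw q u w / margW E p pw q w) :=
            Finset.sum_le_sum fun u _ => keyu u
  have key : ∑ u, ∑ w, margUW E p pw q u w * Real.log (r w u)
      ≤ ∑ u, ∑ w, margUW E p pw q u w * Real.log (margUW E p pw q u w / margW E p pw q w) := by
    calc ∑ u, ∑ w, margUW E p pw q u w * Real.log (r w u)
        = ∑ w, ∑ u, margUW E p pw q u w * Real.log (r w u) := Finset.sum_comm
      _ ≤ ∑ w, ∑ u, margUW E p pw q u w * Real.log (margUW E p pw q u w / margW E p pw q w) :=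
          Finset.sum_le_sum fun w _ => keyw w
      _ = ∑ u, ∑ w, margUW E p pw q u w * Real.log (margUW E p pw q u w / margW E p pw q w) :=
          Finset.sum_comm
  linarith

lemma exists_r_close [Nonempty U] (hp : ∀ v, 0 < p v) (hp1 : ∑ v, p v = 1)
    (hpw0 : ∀ v u w, 0 ≤ pw v u w) (hpw1 : ∀ v u, (v, u) ∈ E → ∑ w, pw v u w = 1)
    (hq : CondDistOn E q) {δ : ℝ} (hδ : 0 < δ) :
    ∃ r : W → U → ℝ, (∀ w u, 0 < r w u) ∧ (∀ w, ∑ u, r w u = 1) ∧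
      GDE E p pw q r ≤ Obj E p pw q + δ := by
  have hcard : 0 < (Fintype.card U : ℝ) := by
    exact_mod_cast Fintype.card_pos
  set c : ℝ := (Fintype.card U : ℝ)⁻¹ with hc
  have hcpos : 0 < c := by positivity
  set e : ℝ := Real.exp (-δ) with he
  have he0 : 0 < e := Real.exp_pos _
  have he1 : e < 1 := by
    rw [he, show (1:ℝ) = Real.exp 0 by rw [Real.exp_zero]]
    exact Real.exp_lt_exp.mpr (by linarith)
  set rt : W → U → ℝ := fun w u =>
    if margW E p pw q w = 0 then c else margUW E p pw q u w / margW E p pw q w with hrt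
  have hrt0 : ∀ w u, 0 ≤ rt w u := by
    intro w u
    rw [hrt]
    dsimp only
    split
    · exact hcpos.le
    · exact div_nonneg (margUW_nonneg E p pw hp hpw0 hq u w) (margW_nonneg E p pw hp hpw0 hq w)
  have hrt1 : ∀ w, ∑ u, rt w u = 1 := by
    intro w
    by_cases hW : margW E p pw q w = 0
    · have hcw : ∀ u : U, rt w u = c := by
        intro u; rw [hrt]; dsimp only; rw [if_pos hW]
      rw [Finset.sum_congr rfl fun u _ => hcw u, Finset.sum_const, Finset.card_univ,
        nsmul_eq_mul, hc, mul_inv_cancel₀ hcard.ne']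
    · rw [hrt]
      simp only [if_neg hW]
      rw [← Finset.sum_div]
      rw [show (∑ u, margUW E p pw q u w) = margW E p pw q w from rfl]
      exact div_self hW
  set r : W → U → ℝ := fun w u => e * rt w u + (1 - e) * c with hr
  have hr0 : ∀ w u, 0 < r w u := fun w u =>
    add_pos_of_nonneg_of_pos (mul_nonneg he0.le (hrt0 w u)) (mul_pos (by linarith) hcpos)
  have hr1 : ∀ w, ∑ u, r w u = 1 := by
    intro w
    rw [hr]
    dsimp only
    rw [Finset.sum_add_distrib, ← Finset.mul_sum, hrt1 w, Finset.sum_const, Finset.card_univ,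
      nsmul_eq_mul]
    have : (Fintype.card U : ℝ) * ((1 - e) * c) = (1 - e) * ((Fintype.card U : ℝ) * c) := by ring
    rw [this, hc, mul_inv_cancel₀ hcard.ne']
    ring
  refine ⟨r, hr0, hr1, ?_⟩
  rw [GDE_eq E p pw hpw1 hq hr0, obj_eq E p pw hp hpw0 hpw1 hq]
  have per : ∀ u w, margUW E p pw q u w *
        (Real.log (margUW E p pw q u w / margW E p pw q w) + (-δ))
      ≤ margUW E p pw q u w * Real.log (r w u) := by
    intro u w
    by_cases hmu : margUW E p pw q u w = 0
    · simp [hmu]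
    · have hmupos : 0 < margUW E p pw q u w :=
        lt_of_le_of_ne (margUW_nonneg E p pw hp hpw0 hq u w) (Ne.symm hmu)
      have hWpos : 0 < margW E p pw q w :=
        lt_of_lt_of_le hmupos (margUW_le_margW E p pw hp hpw0 hq u w)
      have hrtv : rt w u = margUW E p pw q u w / margW E p pw q w := by
        rw [hrt]; simp only [if_neg hWpos.ne']
      have hrtpos : 0 < rt w u := by
        rw [hrtv]; positivity
      have hle : e * rt w u ≤ r w u := by
        rw [hr]
        have : 0 ≤ (1 - e) * c := mul_nonneg (by linarith) hcpos.le
        dsimp only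
        linarith
      have hlog : Real.log (e * rt w u) ≤ Real.log (r w u) :=
        Real.log_le_log (by positivity) hle
      rw [Real.log_mul he0.ne' hrtpos.ne', he, Real.log_exp, hrtv] at hlog
      have := mul_le_mul_of_nonneg_left hlog hmupos.le
      linarith [this]
  have hsum1 : ∑ u, ∑ w, margUW E p pw q u w = 1 := sum_uw_margUW E p pw hp1 hpw1 hq
  have hB : (∑ u, ∑ w, margUW E p pw q u w *
        Real.log (margUW E p pw q u w / margW E p pw q w)) - δ
      ≤ ∑ u, ∑ w, margUW E p pw q u w * Real.log (r w u) := by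
    have expand : ∑ u, ∑ w, (margUW E p pw q u w *
          (Real.log (margUW E p pw q u w / margW E p pw q w) + (-δ)))
        = (∑ u, ∑ w, margUW E p pw q u w *
            Real.log (margUW E p pw q u w / margW E p pw q w))
          + (∑ u, ∑ w, margUW E p pw q u w) * (-δ) := by
      simp only [mul_add, Finset.sum_add_distrib, Finset.sum_mul]
    have hle : ∑ u, ∑ w, (margUW E p pw q u w *
          (Real.log (margUW E p pw q u w / margW E p pw q w) + (-δ)))
        ≤ ∑ u, ∑ w, margUW E p pw q u w * Real.log (r w u) :=
      Finset.sum_le_sum fun u _ => Finset.sum_le_sum fun w _ => per u w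
    rw [expand, hsum1] at hle
    linarith
  linarith

lemma mix_cond {q₀ q₁ : V → U → ℝ} (hq₀ : CondDistOn E q₀) (hq₁ : CondDistOn E q₁)
    {t : ℝ} (ht0 : 0 ≤ t) (ht1 : t ≤ 1) :
    CondDistOn E (fun v u => (1 - t) * q₀ v u + t * q₁ v u) := by
  refine ⟨fun v u => add_nonneg (mul_nonneg (by linarith) (hq₀.1 v u))
    (mul_nonneg ht0 (hq₁.1 v u)), fun v => ?_, fun v u h => ?_⟩
  · rw [Finset.sum_add_distrib, ← Finset.mul_sum, ← Finset.mul_sum, hq₀.2.1 v, hq₁.2.1 v]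
    ring
  · by_contra hE'
    dsimp only at h
    rw [q_zero E hq₀ hE', q_zero E hq₁ hE'] at h
    simp at h

lemma loss_mix (q₀ q₁ : V → U → ℝ) (t : ℝ) :
    LossE E p lt (fun v u => (1 - t) * q₀ v u + t * q₁ v u)
      = (1 - t) * LossE E p lt q₀ + t * LossE E p lt q₁ := by
  unfold LossE
  rw [Finset.mul_sum, Finset.mul_sum, ← Finset.sum_add_distrib]
  refine Finset.sum_congr rfl fun v _ => ?_
  rw [Finset.mul_sum, Finset.mul_sum, ← Finset.sum_add_distrib]
  refine Finset.sum_congr rfl fun u _ => ?_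
  by_cases h : (v, u) ∈ E
  · simp only [if_pos h]
    ring
  · simp [h]

lemma obj_empty (hV : IsEmpty V) (q : V → U → ℝ) : Obj E p pw q = 0 := by
  have hm : ∀ u w, margUW E p pw q u w = 0 := by
    intro u w
    unfold margUW
    rw [Finset.univ_eq_empty, Finset.sum_empty]
  unfold Obj IUV IUW
  rw [Finset.univ_eq_empty (α := V), Finset.sum_empty]
  simp [hm]

lemma GDE_convex (hp : ∀ v, 0 < p v) (hpw0 : ∀ v u w, 0 ≤ pw v u w)
    {q₀ q₁ : V → U → ℝ} {r₀ r₁ : W → U → ℝ}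
    (hq₀ : CondDistOn E q₀) (hq₁ : CondDistOn E q₁)
    (hr₀ : ∀ w u, 0 < r₀ w u) (hr₁ : ∀ w u, 0 < r₁ w u)
    {t : ℝ} (ht0 : 0 ≤ t) (ht1 : t ≤ 1) :
    GDE E p pw (fun v u => (1 - t) * q₀ v u + t * q₁ v u)
        (fun w u => (1 - t) * r₀ w u + t * r₁ w u)
      ≤ (1 - t) * GDE E p pw q₀ r₀ + t * GDE E p pw q₁ r₁ := by
  unfold GDE
  have per : ∀ v u w,
      (if (v, u) ∈ E then p v * ((1 - t) * q₀ v u + t * q₁ v u) * pw v u w *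
        Real.log (((1 - t) * q₀ v u + t * q₁ v u) / ((1 - t) * r₀ w u + t * r₁ w u)) else 0)
      ≤ (1 - t) * (if (v, u) ∈ E then p v * q₀ v u * pw v u w *
          Real.log (q₀ v u / r₀ w u) else 0)
        + t * (if (v, u) ∈ E then p v * q₁ v u * pw v u w *
          Real.log (q₁ v u / r₁ w u) else 0) := by
    intro v u w
    by_cases h : (v, u) ∈ E
    · simp only [if_pos h]
      have hc : 0 ≤ p v * pw v u w := mul_nonneg (hp v).le (hpw0 v u w)
      have halog := alog_convex (hq₀.1 v u) (hq₁.1 v u) (hr₀ w u) (hr₁ w u) ht0 ht1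
      have hmul := mul_le_mul_of_nonneg_left halog hc
      calc p v * ((1 - t) * q₀ v u + t * q₁ v u) * pw v u w *
            Real.log (((1 - t) * q₀ v u + t * q₁ v u) / ((1 - t) * r₀ w u + t * r₁ w u))
          = (p v * pw v u w) * (((1 - t) * q₀ v u + t * q₁ v u) *
            Real.log (((1 - t) * q₀ v u + t * q₁ v u) / ((1 - t) * r₀ w u + t * r₁ w u))) := by
            ring
        _ ≤ (p v * pw v u w) * ((1 - t) * (q₀ v u * Real.log (q₀ v u / r₀ w u))
            + t * (q₁ v u * Real.log (q₁ v u / r₁ w u))) := hmul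
        _ = (1 - t) * (p v * q₀ v u * pw v u w * Real.log (q₀ v u / r₀ w u))
            + t * (p v * q₁ v u * pw v u w * Real.log (q₁ v u / r₁ w u)) := by ring
    · simp [h]
  calc ∑ v, ∑ u, ∑ w,
        (if (v, u) ∈ E then p v * ((1 - t) * q₀ v u + t * q₁ v u) * pw v u w *
          Real.log (((1 - t) * q₀ v u + t * q₁ v u) / ((1 - t) * r₀ w u + t * r₁ w u)) else 0)
      ≤ ∑ v, ∑ u, ∑ w,
        ((1 - t) * (if (v, u) ∈ E then p v * q₀ v u * pw v u w *
            Real.log (q₀ v u / r₀ w u) else 0)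
          + t * (if (v, u) ∈ E then p v * q₁ v u * pw v u w *
            Real.log (q₁ v u / r₁ w u) else 0)) := by
        exact Finset.sum_le_sum fun v _ => Finset.sum_le_sum fun u _ =>
          Finset.sum_le_sum fun w _ => per v u w
    _ = (1 - t) * (∑ v, ∑ u, ∑ w, (if (v, u) ∈ E then p v * q₀ v u * pw v u w *
            Real.log (q₀ v u / r₀ w u) else 0))
        + t * (∑ v, ∑ u, ∑ w, (if (v, u) ∈ E then p v * q₁ v u * pw v u w *
            Real.log (q₁ v u / r₁ w u) else 0)) := by
        simp only [Finset.sum_add_distrib, Finset.mul_sum]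

lemma obj_convex (hE : ∀ v : V, ∃ u, (v, u) ∈ E) (hp : ∀ v, 0 < p v) (hp1 : ∑ v, p v = 1)
    (hpw0 : ∀ v u w, 0 ≤ pw v u w) (hpw1 : ∀ v u, (v, u) ∈ E → ∑ w, pw v u w = 1)
    {q₀ q₁ : V → U → ℝ} (hq₀ : CondDistOn E q₀) (hq₁ : CondDistOn E q₁)
    {t : ℝ} (ht0 : 0 ≤ t) (ht1 : t ≤ 1) :
    Obj E p pw (fun v u => (1 - t) * q₀ v u + t * q₁ v u)
      ≤ (1 - t) * Obj E p pw q₀ + t * Obj E p pw q₁ := by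
  rcases isEmpty_or_nonempty V with hV | hV
  · rw [obj_empty E p pw hV, obj_empty E p pw hV, obj_empty E p pw hV]
    simp
  · have hU : Nonempty U := ⟨(hE (Classical.arbitrary V)).choose⟩
    have hqt := mix_cond E hq₀ hq₁ ht0 ht1
    refine le_of_forall_pos_le_add fun δ hδ => ?_
    obtain ⟨r₀, hr₀p, hr₀1, hr₀c⟩ := exists_r_close E p pw hp hp1 hpw0 hpw1 hq₀ hδ
    obtain ⟨r₁, hr₁p, hr₁1, hr₁c⟩ := exists_r_close E p pw hp hp1 hpw0 hpw1 hq₁ hδ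
    have hrt0 : ∀ w u, 0 < (1 - t) * r₀ w u + t * r₁ w u := by
      intro w u
      rcases eq_or_lt_of_le ht0 with h | h
      · rw [← h]; simpa using hr₀p w u
      · exact add_pos_of_nonneg_of_pos (mul_nonneg (by linarith) (hr₀p w u).le)
          (mul_pos h (hr₁p w u))
    have hrt1 : ∀ w, ∑ u, ((1 - t) * r₀ w u + t * r₁ w u) = 1 := by
      intro w
      rw [Finset.sum_add_distrib, ← Finset.mul_sum, ← Finset.mul_sum, hr₀1 w, hr₁1 w]
      ring
    calc Obj E p pw (fun v u => (1 - t) * q₀ v u + t * q₁ v u)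
        ≤ GDE E p pw (fun v u => (1 - t) * q₀ v u + t * q₁ v u)
            (fun w u => (1 - t) * r₀ w u + t * r₁ w u) :=
          obj_le_GDE E p pw hp hpw0 hpw1 hqt hrt0 hrt1
      _ ≤ (1 - t) * GDE E p pw q₀ r₀ + t * GDE E p pw q₁ r₁ :=
          GDE_convex E p pw hp hpw0 hq₀ hq₁ hr₀p hr₁p ht0 ht1
      _ ≤ (1 - t) * (Obj E p pw q₀ + δ) + t * (Obj E p pw q₁ + δ) :=
          add_le_add (mul_le_mul_of_nonneg_left hr₀c (by linarith))
            (mul_le_mul_of_nonneg_left hr₁c ht0)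
      _ = (1 - t) * Obj E p pw q₀ + t * Obj E p pw q₁ + δ := by ring

lemma apply_continuous (v : V) (u : U) : Continuous fun q : V → U → ℝ => q v u :=
  (continuous_apply u).comp (continuous_apply v)

lemma loss_continuous : Continuous (LossE E p lt) := by
  unfold LossE
  refine continuous_finset_sum _ fun v _ => continuous_finset_sum _ fun u _ => ?_
  by_cases h : (v, u) ∈ E
  · simp only [if_pos h]
    exact (continuous_const.mul (apply_continuous v u)).mul
      continuous_const
  · simp only [if_neg h]
    exact continuous_const

lemma margU_continuous (u : U) : Continuous fun q : V → U → ℝ => margU p q u := by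
  unfold margU
  refine continuous_finset_sum _ fun v _ => ?_
  exact continuous_const.mul (apply_continuous v u)

lemma margUW_continuous (u : U) (w : W) :
    Continuous fun q : V → U → ℝ => margUW E p pw q u w := by
  unfold margUW jointD
  refine continuous_finset_sum _ fun v _ => ?_
  by_cases h : (v, u) ∈ E
  · simp only [if_pos h]
    exact (continuous_const.mul (apply_continuous v u)).mul
      continuous_const
  · simp only [if_neg h]
    exact continuous_const

lemma margW_continuous (w : W) : Continuous fun q : V → U → ℝ => margW E p pw q w := by
  unfold margW
  refine continuous_finset_sum _ fun u _ => ?_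
  exact margUW_continuous E p pw u w

lemma obj_continuousOn (hp : ∀ v, 0 < p v) (hpw0 : ∀ v u w, 0 ≤ pw v u w)
    (hpw1 : ∀ v u, (v, u) ∈ E → ∑ w, pw v u w = 1) :
    ContinuousOn (Obj E p pw) {q : V → U → ℝ | CondDistOn E q} := by
  have hA : Continuous fun q : V → U → ℝ => ∑ v, ∑ u, p v * q v u * Real.log (q v u) := by
    refine continuous_finset_sum _ fun v _ => continuous_finset_sum _ fun u _ => ?_
    have h1 : Continuous fun q : V → U → ℝ => q v u * Real.log (q v u) :=
      Real.continuous_mul_log.comp (apply_continuous v u)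
    have h2 : Continuous fun q : V → U → ℝ => p v * (q v u * Real.log (q v u)) :=
      continuous_const.mul h1
    have : (fun q : V → U → ℝ => p v * q v u * Real.log (q v u))
        = fun q : V → U → ℝ => p v * (q v u * Real.log (q v u)) := by
      funext q; ring
    rw [this]
    exact h2
  have hB : ContinuousOn (fun q : V → U → ℝ => ∑ u, ∑ w, margUW E p pw q u w *
      Real.log (margUW E p pw q u w / margW E p pw q w)) {q : V → U → ℝ | CondDistOn E q} := by
    refine continuousOn_finset_sum _ fun u _ => continuousOn_finset_sum _ fun w _ => ?_
    have hpair : Continuous fun q : V → U → ℝ => (margUW E p pw q u w, margW E p pw q w) :=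
      (margUW_continuous E p pw u w).prodMk (margW_continuous E p pw w)
    have hmap : Set.MapsTo (fun q : V → U → ℝ => (margUW E p pw q u w, margW E p pw q w))
        {q : V → U → ℝ | CondDistOn E q}
        {x : ℝ × ℝ | 0 ≤ x.1 ∧ x.1 ≤ 1 * x.2} := by
      intro q hq
      refine ⟨margUW_nonneg E p pw hp hpw0 hq u w, ?_⟩
      rw [one_mul]
      exact margUW_le_margW E p pw hp hpw0 hq u w
    exact (hcont one_pos).comp hpair.continuousOn hmap
  have hQ : ContinuousOn (fun q : V → U → ℝ => (∑ v, ∑ u, p v * q v u * Real.log (q v u))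
      - ∑ u, ∑ w, margUW E p pw q u w * Real.log (margUW E p pw q u w / margW E p pw q w))
      {q : V → U → ℝ | CondDistOn E q} := hA.continuousOn.sub hB
  exact hQ.congr fun q hq => obj_eq E p pw hp hpw0 hpw1 hq

lemma fs_closed (L : ℝ) : IsClosed {q : V → U → ℝ | CondDistOn E q ∧ LossE E p lt q ≤ L} := by
  have hA : ∀ (v : V) (u : U), IsClosed {q : V → U → ℝ | 0 ≤ q v u} := fun v u =>
    isClosed_le continuous_const (apply_continuous v u)
  have hB : ∀ v : V, IsClosed {q : V → U → ℝ | ∑ u, q v u = 1} := fun v =>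
    isClosed_eq (continuous_finset_sum _ fun u _ => (continuous_apply u).comp (continuous_apply v))
      continuous_const
  have hC : ∀ (v : V) (u : U), IsClosed {q : V → U → ℝ | q v u ≠ 0 → (v, u) ∈ E} := by
    intro v u
    by_cases h : (v, u) ∈ E
    · have : {q : V → U → ℝ | q v u ≠ 0 → (v, u) ∈ E} = Set.univ :=
        Set.eq_univ_of_forall fun q _ => h
      rw [this]; exact isClosed_univ
    · have : {q : V → U → ℝ | q v u ≠ 0 → (v, u) ∈ E} = {q : V → U → ℝ | q v u = 0} := by
        ext q; simp [h]
      rw [this]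
      exact isClosed_eq (apply_continuous v u) continuous_const
  have hD : IsClosed {q : V → U → ℝ | LossE E p lt q ≤ L} :=
    isClosed_le (loss_continuous E p lt) continuous_const
  have heq : {q : V → U → ℝ | CondDistOn E q ∧ LossE E p lt q ≤ L}
      = (((⋂ v, ⋂ u, ({q : V → U → ℝ | 0 ≤ q v u} ∩ {q : V → U → ℝ | q v u ≠ 0 → (v, u) ∈ E}))
        ∩ (⋂ v, {q : V → U → ℝ | ∑ u, q v u = 1}))
        ∩ {q : V → U → ℝ | LossE E p lt q ≤ L}) := by
    ext q
    simp only [Set.mem_setOf_eq, Set.mem_inter_iff, Set.mem_iInter, CondDistOn]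
    constructor
    · rintro ⟨⟨h1, h2, h3⟩, h4⟩
      exact ⟨⟨fun v u => ⟨h1 v u, h3 v u⟩, h2⟩, h4⟩
    · rintro ⟨⟨h13, h2⟩, h4⟩
      exact ⟨⟨fun v u => (h13 v u).1, h2, fun v u => (h13 v u).2⟩, h4⟩
  rw [heq]
  exact (((isClosed_iInter fun v => isClosed_iInter fun u =>
    (hA v u).inter (hC v u)).inter (isClosed_iInter hB)).inter hD)

lemma fs_compact (L : ℝ) :
    IsCompact {q : V → U → ℝ | CondDistOn E q ∧ LossE E p lt q ≤ L} := by
  have hsub : {q : V → U → ℝ | CondDistOn E q ∧ LossE E p lt q ≤ L}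
      ⊆ Set.pi Set.univ (fun _ : V => Set.pi Set.univ fun _ : U => Set.Icc (0:ℝ) 1) := by
    intro q hq
    intro v _
    intro u _
    exact ⟨hq.1.1 v u, q_le_one E hq.1 v u⟩
  have hcomp : IsCompact (Set.pi Set.univ (fun _ : V => Set.pi Set.univ
      fun _ : U => Set.Icc (0:ℝ) 1)) :=
    isCompact_univ_pi fun _ => isCompact_univ_pi fun _ => isCompact_Icc
  exact IsCompact.of_isClosed_subset hcomp (fs_closed E p lt L) hsub

def Tr (E : Finset (V × U)) (p : V → ℝ) (pw : V → U → W → ℝ) (lt : V → U → ℝ) (L : ℝ) : ℝ :=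
  sInf (Obj E p pw '' {q | CondDistOn E q ∧ LossE E p lt q ≤ L})

lemma opt (hp : ∀ v, 0 < p v)
    (hpw0 : ∀ v u w, 0 ≤ pw v u w) (hpw1 : ∀ v u, (v, u) ∈ E → ∑ w, pw v u w = 1)
    (hne : ∀ v : V, (Finset.univ.filter (fun u => (v, u) ∈ E)).Nonempty)
    {L : ℝ}
    (hL : (∑ v, p v * (Finset.univ.filter (fun u => (v, u) ∈ E)).inf' (hne v)
      (fun u => lt v u)) ≤ L) :
    ∃ q₀, (CondDistOn E q₀ ∧ LossE E p lt q₀ ≤ L)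
      ∧ (∀ q, CondDistOn E q → LossE E p lt q ≤ L → Obj E p pw q₀ ≤ Obj E p pw q)
      ∧ Tr E p pw lt L = Obj E p pw q₀
      ∧ TL E p pw lt L = ((Obj E p pw q₀ : ℝ) : EReal) := by
  obtain ⟨qm, hqmc, hqml⟩ := exists_qmin E p lt hne
  have hFne : Set.Nonempty {q | CondDistOn E q ∧ LossE E p lt q ≤ L} :=
    ⟨qm, hqmc, by rw [hqml]; exact hL⟩
  have hFc := fs_compact E p lt L
  have hcontF : ContinuousOn (Obj E p pw) {q | CondDistOn E q ∧ LossE E p lt q ≤ L} :=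
    (obj_continuousOn E p pw hp hpw0 hpw1).mono fun q hq => hq.1
  obtain ⟨q₀, hq₀F, hmin⟩ := hFc.exists_isMinOn hFne hcontF
  have hminle : ∀ q, CondDistOn E q → LossE E p lt q ≤ L → Obj E p pw q₀ ≤ Obj E p pw q :=
    fun q hq hle => isMinOn_iff.mp hmin q ⟨hq, hle⟩
  have hleast : IsLeast (Obj E p pw '' {q | CondDistOn E q ∧ LossE E p lt q ≤ L})
      (Obj E p pw q₀) := by
    refine ⟨Set.mem_image_of_mem _ hq₀F, ?_⟩
    rintro x ⟨q, hq, rfl⟩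
    exact hminle q hq.1 hq.2
  refine ⟨q₀, hq₀F, hminle, hleast.csInf_eq, ?_⟩
  apply le_antisymm
  · exact sInf_le ⟨q₀, hq₀F.1, hq₀F.2, rfl⟩
  · refine le_sInf fun x hx => ?_
    obtain ⟨q, hq, hle, rfl⟩ := hx
    exact EReal.coe_le_coe_iff.mpr (hminle q hq hle)

lemma TL_top (hp : ∀ v, 0 < p v)
    (hne : ∀ v : V, (Finset.univ.filter (fun u => (v, u) ∈ E)).Nonempty)
    {L : ℝ}
    (hL : L < ∑ v, p v * (Finset.univ.filter (fun u => (v, u) ∈ E)).inf' (hne v)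
      (fun u => lt v u)) :
    TL E p pw lt L = ⊤ := by
  have hempty : {x : EReal | ∃ q, CondDistOn E q ∧ LossE E p lt q ≤ L
      ∧ x = ((Obj E p pw q : ℝ) : EReal)} = ∅ := by
    ext x
    simp only [Set.mem_setOf_eq, Set.mem_empty_iff_false, iff_false]
    rintro ⟨q, hq, hle, _⟩
    have := loss_ge E p lt hp hne hq
    linarith
  unfold TL
  rw [hempty]
  exact sInf_empty

lemma TL_const (hp : ∀ v, 0 < p v)
    (hne : ∀ v : V, (Finset.univ.filter (fun u => (v, u) ∈ E)).Nonempty)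
    {L : ℝ}
    (hL : (∑ v, p v * (Finset.univ.filter (fun u => (v, u) ∈ E)).sup' (hne v)
      (fun u => lt v u)) ≤ L) :
    TL E p pw lt L = TL E p pw lt (∑ v, p v * (Finset.univ.filter (fun u => (v, u) ∈ E)).sup'
      (hne v) (fun u => lt v u)) := by
  unfold TL
  congr 1
  ext x
  simp only [Set.mem_setOf_eq]
  constructor
  · rintro ⟨q, hq, hle, rfl⟩
    exact ⟨q, hq, loss_le E p lt hp hne hq, rfl⟩
  · rintro ⟨q, hq, hle, rfl⟩
    exact ⟨q, hq, hle.trans hL, rfl⟩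

lemma Tr_anti (hp : ∀ v, 0 < p v)
    (hpw0 : ∀ v u w, 0 ≤ pw v u w) (hpw1 : ∀ v u, (v, u) ∈ E → ∑ w, pw v u w = 1)
    (hne : ∀ v : V, (Finset.univ.filter (fun u => (v, u) ∈ E)).Nonempty)
    {L₁ L₂ : ℝ}
    (h1 : (∑ v, p v * (Finset.univ.filter (fun u => (v, u) ∈ E)).inf' (hne v)
      (fun u => lt v u)) ≤ L₁) (h12 : L₁ ≤ L₂) :
    Tr E p pw lt L₂ ≤ Tr E p pw lt L₁ := by
  obtain ⟨q₁, hq₁F, _, hTr₁, _⟩ := opt E p pw lt hp hpw0 hpw1 hne h1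
  obtain ⟨q₂, hq₂F, hmin₂, hTr₂, _⟩ := opt E p pw lt hp hpw0 hpw1 hne (h1.trans h12)
  rw [hTr₁, hTr₂]
  exact hmin₂ q₁ hq₁F.1 (hq₁F.2.trans h12)

lemma Tr_cvx (hE : ∀ v : V, ∃ u, (v, u) ∈ E) (hp : ∀ v, 0 < p v) (hp1 : ∑ v, p v = 1)
    (hpw0 : ∀ v u w, 0 ≤ pw v u w) (hpw1 : ∀ v u, (v, u) ∈ E → ∑ w, pw v u w = 1)
    (hne : ∀ v : V, (Finset.univ.filter (fun u => (v, u) ∈ E)).Nonempty)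
    {a b t : ℝ}
    (ha : (∑ v, p v * (Finset.univ.filter (fun u => (v, u) ∈ E)).inf' (hne v)
      (fun u => lt v u)) ≤ a)
    (hb : (∑ v, p v * (Finset.univ.filter (fun u => (v, u) ∈ E)).inf' (hne v)
      (fun u => lt v u)) ≤ b)
    (ht0 : 0 ≤ t) (ht1 : t ≤ 1) :
    Tr E p pw lt ((1 - t) * a + t * b)
      ≤ (1 - t) * Tr E p pw lt a + t * Tr E p pw lt b := by
  obtain ⟨qa, hqaF, _, hTra, _⟩ := opt E p pw lt hp hpw0 hpw1 hne ha
  obtain ⟨qb, hqbF, _, hTrb, _⟩ := opt E p pw lt hp hpw0 hpw1 hne hb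
  have hmixL : (∑ v, p v * (Finset.univ.filter (fun u => (v, u) ∈ E)).inf' (hne v)
      (fun u => lt v u)) ≤ (1 - t) * a + t * b := by nlinarith
  obtain ⟨qm', hqmF, hminm, hTrm, _⟩ := opt E p pw lt hp hpw0 hpw1 hne hmixL
  have hqt := mix_cond E hqaF.1 hqbF.1 ht0 ht1
  have hlt : LossE E p lt (fun v u => (1 - t) * qa v u + t * qb v u) ≤ (1 - t) * a + t * b := by
    rw [loss_mix]
    have h1 := hqaF.2
    have h2 := hqbF.2
    nlinarith
  rw [hTrm, hTra, hTrb]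
  calc Obj E p pw qm' ≤ Obj E p pw (fun v u => (1 - t) * qa v u + t * qb v u) :=
        hminm _ hqt hlt
    _ ≤ (1 - t) * Obj E p pw qa + t * Obj E p pw qb :=
        obj_convex E p pw hE hp hp1 hpw0 hpw1 hqaF.1 hqbF.1 ht0 ht1

lemma TL_eq_Tr (hp : ∀ v, 0 < p v)
    (hpw0 : ∀ v u w, 0 ≤ pw v u w) (hpw1 : ∀ v u, (v, u) ∈ E → ∑ w, pw v u w = 1)
    (hne : ∀ v : V, (Finset.univ.filter (fun u => (v, u) ∈ E)).Nonempty)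
    {L : ℝ}
    (hL : (∑ v, p v * (Finset.univ.filter (fun u => (v, u) ∈ E)).inf' (hne v)
      (fun u => lt v u)) ≤ L) :
    TL E p pw lt L = ((Tr E p pw lt L : ℝ) : EReal) := by
  obtain ⟨q₀, _, _, hTr, hTL⟩ := opt E p pw lt hp hpw0 hpw1 hne hL
  rw [hTL, hTr]

lemma Tr_contOn (hE : ∀ v : V, ∃ u, (v, u) ∈ E) (hp : ∀ v, 0 < p v) (hp1 : ∑ v, p v = 1)
    (hpw0 : ∀ v u w, 0 ≤ pw v u w) (hpw1 : ∀ v u, (v, u) ∈ E → ∑ w, pw v u w = 1)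
    (hne : ∀ v : V, (Finset.univ.filter (fun u => (v, u) ∈ E)).Nonempty) :
    ContinuousOn (Tr E p pw lt) (Set.Ici (∑ v, p v *
      (Finset.univ.filter (fun u => (v, u) ∈ E)).inf' (hne v) (fun u => lt v u))) := by
  set Lm : ℝ := ∑ v, p v * (Finset.univ.filter (fun u => (v, u) ∈ E)).inf' (hne v)
    (fun u => lt v u) with hLm
  have hcvx : ConvexOn ℝ (Set.Ici Lm) (Tr E p pw lt) := by
    refine ⟨convex_Ici _, ?_⟩
    intro x hx y hy a b ha hb hab
    have h := Tr_cvx E p pw lt hE hp hp1 hpw0 hpw1 hne (a := x) (b := y) (t := b)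
      hx hy hb (by linarith)
    rw [show (1 : ℝ) - b = a by linarith] at h
    simpa [smul_eq_mul] using h
  have hcont1 : ContinuousOn (Tr E p pw lt) (Set.Ioi Lm) :=
    (hcvx.subset Set.Ioi_subset_Ici_self (convex_Ioi _)).continuousOn isOpen_Ioi
  have hbdry : ContinuousWithinAt (Tr E p pw lt) (Set.Ici Lm) Lm := by
    rw [ContinuousWithinAt, Metric.tendsto_nhdsWithin_nhds]
    intro ε hε
    have claim : ∃ δ > 0, Tr E p pw lt Lm - ε < Tr E p pw lt (Lm + δ) := by
      by_contra hcon
      push_neg at hcon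
      have hopt : ∀ n : ℕ, ∃ q₀, (CondDistOn E q₀ ∧ LossE E p lt q₀ ≤ Lm + 1/((n:ℝ)+1))
          ∧ (∀ q, CondDistOn E q → LossE E p lt q ≤ Lm + 1/((n:ℝ)+1) →
              Obj E p pw q₀ ≤ Obj E p pw q)
          ∧ Tr E p pw lt (Lm + 1/((n:ℝ)+1)) = Obj E p pw q₀
          ∧ TL E p pw lt (Lm + 1/((n:ℝ)+1)) = ((Obj E p pw q₀ : ℝ) : EReal) := by
        intro n
        exact opt E p pw lt hp hpw0 hpw1 hne (le_add_of_nonneg_right (by positivity))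
      choose qn hqnF hqnmin hqnTr hqnTL using hopt
      have hqn1 : ∀ n, qn n ∈ {q : V → U → ℝ | CondDistOn E q ∧ LossE E p lt q ≤ Lm + 1} := by
        intro n
        refine ⟨(hqnF n).1, le_trans (hqnF n).2 ?_⟩
        have h1 : 1/((n:ℝ)+1) ≤ 1 := by
          rw [div_le_one (by positivity)]
          simp
        linarith
      obtain ⟨a, haF, φ, hφ, hconv⟩ := (fs_compact E p lt (Lm + 1)).tendsto_subseq hqn1
      have hLossTend : Filter.Tendsto (fun k => LossE E p lt (qn (φ k))) Filter.atTop
          (nhds (LossE E p lt a)) :=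
        ((loss_continuous E p lt).tendsto a).comp hconv
      have hbtend : Filter.Tendsto (fun k : ℕ => Lm + 1/((φ k : ℝ)+1)) Filter.atTop (nhds Lm) := by
        have h0 : Filter.Tendsto (fun n : ℕ => 1/((n:ℝ)+1)) Filter.atTop (nhds 0) :=
          tendsto_one_div_add_atTop_nhds_zero_nat
        have h1 := (h0.comp (hφ.tendsto_atTop)).const_add Lm
        simpa using h1
      have hLossa : LossE E p lt a ≤ Lm :=
        le_of_tendsto_of_tendsto' hLossTend hbtend fun k => (hqnF (φ k)).2
      have hObjTend : Filter.Tendsto (fun k => Obj E p pw (qn (φ k))) Filter.atTop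
          (nhds (Obj E p pw a)) := by
        have hwithin : Filter.Tendsto (fun k => qn (φ k)) Filter.atTop
            (nhdsWithin a {q : V → U → ℝ | CondDistOn E q}) :=
          tendsto_nhdsWithin_of_tendsto_nhds_of_eventually_within _ hconv
            (Filter.Eventually.of_forall fun k => (hqnF (φ k)).1)
        exact Filter.Tendsto.comp ((obj_continuousOn E p pw hp hpw0 hpw1) a haF.1) hwithin
      have hObjle : ∀ k, Obj E p pw (qn (φ k)) ≤ Tr E p pw lt Lm - ε := by
        intro k
        rw [← hqnTr (φ k)]
        exact hcon (1/((φ k : ℝ)+1)) (by positivity)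
      have hObja : Obj E p pw a ≤ Tr E p pw lt Lm - ε :=
        le_of_tendsto hObjTend (Filter.Eventually.of_forall hObjle)
      obtain ⟨q₀, _, hmin₀, hTr₀, _⟩ := opt E p pw lt hp hpw0 hpw1 hne (le_refl Lm)
      have hfin : Tr E p pw lt Lm ≤ Obj E p pw a := by
        rw [hTr₀]
        exact hmin₀ a haF.1 hLossa
      linarith
    obtain ⟨δ, hδ, hδ2⟩ := claim
    refine ⟨δ, hδ, ?_⟩
    intro x hx hdist
    rw [Real.dist_eq] at hdist ⊢
    have hxLm : Lm ≤ x := hx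
    have h1 : Tr E p pw lt x ≤ Tr E p pw lt Lm :=
      Tr_anti E p pw lt hp hpw0 hpw1 hne le_rfl hxLm
    have hxlt : x ≤ Lm + δ := by
      rw [abs_lt] at hdist
      linarith [hdist.2]
    have h2 : Tr E p pw lt (Lm + δ) ≤ Tr E p pw lt x :=
      Tr_anti E p pw lt hp hpw0 hpw1 hne hxLm hxlt
    rw [abs_lt]
    constructor <;> linarith
  intro x hx
  rcases eq_or_lt_of_le (show Lm ≤ x from hx) with h | h
  · rw [← h]
    exact hbdry
  · exact (hcont1.continuousAt (Ioi_mem_nhds h)).continuousWithinAt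

lemma Tr_strict (hE : ∀ v : V, ∃ u, (v, u) ∈ E) (hp : ∀ v, 0 < p v) (hp1 : ∑ v, p v = 1)
    (hpw0 : ∀ v u w, 0 ≤ pw v u w) (hpw1 : ∀ v u, (v, u) ∈ E → ∑ w, pw v u w = 1)
    (hlt : ∀ v u, 0 ≤ lt v u)
    (hne : ∀ v : V, (Finset.univ.filter (fun u => (v, u) ∈ E)).Nonempty)
    {Lmax : ℝ}
    (hLmax : IsLeast {L : ℝ | 0 ≤ L ∧ TL E p pw lt L = ⨅ L' : ℝ, TL E p pw lt L'} Lmax)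
    {x y : ℝ}
    (hx : (∑ v, p v * (Finset.univ.filter (fun u => (v, u) ∈ E)).inf' (hne v)
      (fun u => lt v u)) ≤ x)
    (hxy : x < y) (hy : y ≤ Lmax) :
    Tr E p pw lt y < Tr E p pw lt x := by
  set Lm : ℝ := ∑ v, p v * (Finset.univ.filter (fun u => (v, u) ∈ E)).inf' (hne v)
    (fun u => lt v u) with hLm
  by_contra hcon
  push_neg at hcon
  have hyx : Tr E p pw lt y ≤ Tr E p pw lt x :=
    Tr_anti E p pw lt hp hpw0 hpw1 hne hx hxy.le
  have heq : Tr E p pw lt x = Tr E p pw lt y := le_antisymm hcon hyx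
  have hyLm : Lm ≤ y := le_trans hx hxy.le
  have hiInf : TL E p pw lt y = ⨅ L' : ℝ, TL E p pw lt L' := by
    refine le_antisymm ?_ (iInf_le _ y)
    refine le_iInf fun L' => ?_
    rcases lt_or_ge L' Lm with hL' | hL'
    · rw [TL_top E p pw lt hp hne hL']
      exact le_top
    · rcases le_or_gt y L' with h1 | h1
      · -- L' ≥ y : use convexity to show Tr y ≤ Tr L'
        rcases eq_or_lt_of_le h1 with h2 | h2
        · rw [h2]
        · set t := (y - x)/(L' - x) with hts
          have hLx : 0 < L' - x := by linarith
          have ht0 : 0 ≤ t := div_nonneg (by linarith) hLx.le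
          have ht1 : t ≤ 1 := (div_le_one hLx).mpr (by linarith)
          have htm : t * (L' - x) = y - x := div_mul_cancel₀ _ hLx.ne'
          have hyrep : (1 - t) * x + t * L' = y := by linear_combination htm
          have hcv := Tr_cvx E p pw lt hE hp hp1 hpw0 hpw1 hne (a := x) (b := L')
            hx hL' ht0 ht1
          rw [hyrep, heq] at hcv
          have htpos : 0 < t := div_pos (by linarith) hLx
          have hTry : Tr E p pw lt y ≤ Tr E p pw lt L' := by nlinarith [hcv]
          rw [TL_eq_Tr E p pw lt hp hpw0 hpw1 hne hyLm,
            TL_eq_Tr E p pw lt hp hpw0 hpw1 hne hL']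
          exact_mod_cast hTry
      · -- L' < y
        rw [TL_eq_Tr E p pw lt hp hpw0 hpw1 hne hyLm,
          TL_eq_Tr E p pw lt hp hpw0 hpw1 hne hL']
        exact_mod_cast Tr_anti E p pw lt hp hpw0 hpw1 hne hL' h1.le
  have hTLxy : TL E p pw lt x = TL E p pw lt y := by
    rw [TL_eq_Tr E p pw lt hp hpw0 hpw1 hne hx,
      TL_eq_Tr E p pw lt hp hpw0 hpw1 hne hyLm, heq]
  have hx0 : (0:ℝ) ≤ x := le_trans (Lrmin_nonneg E p lt hp hlt hne) hx
  have hxmem : x ∈ {L : ℝ | 0 ≤ L ∧ TL E p pw lt L = ⨅ L' : ℝ, TL E p pw lt L'} :=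
    ⟨hx0, by rw [hTLxy]; exact hiInf⟩
  have := hLmax.2 hxmem
  linarith

end TLaux

/-- properties of the target-loss function `T(L)` across regimes:
infeasibility below `L_min`, feasibility and finiteness above, continuity on
`[L_min,∞)`, strict decrease on `[L_min, L_max]` with the loss constraint active,
and constancy above `L_Max`. -/
theorem targetLoss_regimes
    (E : Finset (V × U)) (hE : ∀ v : V, ∃ u, (v, u) ∈ E)
    (p : V → ℝ) (hp : ∀ v, 0 < p v) (hp1 : ∑ v, p v = 1)
    (pw : V → U → W → ℝ) (hpw0 : ∀ v u w, 0 ≤ pw v u w)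
    (hpw1 : ∀ v u, (v, u) ∈ E → ∑ w, pw v u w = 1)
    (lt : V → U → ℝ) (hlt : ∀ v u, 0 ≤ lt v u)
    (Lmin LMax Lmax : ℝ)
    (hLmin : Lmin = ∑ v, p v *
      (Finset.univ.filter (fun u => (v, u) ∈ E)).inf'
        (by obtain ⟨u, hu⟩ := hE v
            exact ⟨u, Finset.mem_filter.mpr ⟨Finset.mem_univ u, hu⟩⟩)
        (fun u => lt v u))
    (hLMax : LMax = ∑ v, p v *
      (Finset.univ.filter (fun u => (v, u) ∈ E)).sup'
        (by obtain ⟨u, hu⟩ := hE v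
            exact ⟨u, Finset.mem_filter.mpr ⟨Finset.mem_univ u, hu⟩⟩)
        (fun u => lt v u))
    (hLmax : IsLeast {L : ℝ | 0 ≤ L
      ∧ TL E p pw lt L = ⨅ L' : ℝ, TL E p pw lt L'} Lmax) :
    (∀ L : ℝ, 0 ≤ L → L < Lmin → TL E p pw lt L = ⊤)
      ∧ (∀ L : ℝ, Lmin ≤ L →
          (∃ q, CondDistOn E q ∧ LossE E p lt q ≤ L) ∧ TL E p pw lt L < ⊤)
      ∧ ContinuousOn (TL E p pw lt) (Set.Ici Lmin)
      ∧ StrictAntiOn (TL E p pw lt) (Set.Icc Lmin Lmax)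
      ∧ (∀ L ∈ Set.Icc Lmin Lmax, ∃ q, CondDistOn E q
          ∧ LossE E p lt q = L ∧ TL E p pw lt L = (Obj E p pw q : EReal))
      ∧ (∀ L : ℝ, LMax ≤ L → TL E p pw lt L = TL E p pw lt LMax) := by
  have hne : ∀ v : V, (Finset.univ.filter (fun u => (v, u) ∈ E)).Nonempty := by
    intro v
    obtain ⟨u, hu⟩ := hE v
    exact ⟨u, Finset.mem_filter.mpr ⟨Finset.mem_univ u, hu⟩⟩
  have hLm : Lmin = ∑ v, p v * (Finset.univ.filter (fun u => (v, u) ∈ E)).inf' (hne v)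
      (fun u => lt v u) := hLmin
  have hLM : LMax = ∑ v, p v * (Finset.univ.filter (fun u => (v, u) ∈ E)).sup' (hne v)
      (fun u => lt v u) := hLMax
  refine ⟨?_, ?_, ?_, ?_, ?_, ?_⟩
  · -- infeasible below Lmin
    intro L _ hL
    exact TLaux.TL_top E p pw lt hp hne (lt_of_lt_of_le hL (le_of_eq hLm))
  · -- feasible and finite above Lmin
    intro L hL
    obtain ⟨q₀, hq₀F, _, _, hTL⟩ := TLaux.opt E p pw lt hp hpw0 hpw1 hne
      (le_trans (le_of_eq hLm.symm) hL)
    refine ⟨⟨q₀, hq₀F.1, hq₀F.2⟩, ?_⟩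
    rw [hTL]
    exact EReal.coe_lt_top _
  · -- continuity on [Lmin, ∞)
    have h1 : ContinuousOn (fun L : ℝ => ((TLaux.Tr E p pw lt L : ℝ) : EReal))
        (Set.Ici Lmin) := by
      rw [hLm]
      exact continuous_coe_real_ereal.comp_continuousOn
        (TLaux.Tr_contOn E p pw lt hE hp hp1 hpw0 hpw1 hne)
    refine h1.congr ?_
    intro L hL
    exact TLaux.TL_eq_Tr E p pw lt hp hpw0 hpw1 hne (le_trans (le_of_eq hLm.symm) hL)
  · -- strict decrease on [Lmin, Lmax]
    intro x hx y hy hxy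
    have h1 := TLaux.Tr_strict E p pw lt hE hp hp1 hpw0 hpw1 hlt hne hLmax
      (le_trans (le_of_eq hLm.symm) hx.1) hxy hy.2
    rw [TLaux.TL_eq_Tr E p pw lt hp hpw0 hpw1 hne (le_trans (le_of_eq hLm.symm) hx.1),
      TLaux.TL_eq_Tr E p pw lt hp hpw0 hpw1 hne (le_trans (le_of_eq hLm.symm) hy.1)]
    exact_mod_cast h1
  · -- attainment with active constraint on [Lmin, Lmax]
    intro L hL
    obtain ⟨q₀, hq₀F, hmin₀, hTr₀, hTL₀⟩ := TLaux.opt E p pw lt hp hpw0 hpw1 hne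
      (le_trans (le_of_eq hLm.symm) hL.1)
    rcases eq_or_lt_of_le hq₀F.2 with he | hlt'
    · exact ⟨q₀, hq₀F.1, he, hTL₀⟩
    · exfalso
      have hL0ge : (∑ v, p v * (Finset.univ.filter (fun u => (v, u) ∈ E)).inf' (hne v)
          (fun u => lt v u)) ≤ LossE E p lt q₀ := TLaux.loss_ge E p lt hp hne hq₀F.1
      obtain ⟨q₁, hq₁F, hmin₁, hTr₁, _⟩ := TLaux.opt E p pw lt hp hpw0 hpw1 hne hL0ge
      have hTrle : TLaux.Tr E p pw lt (LossE E p lt q₀) ≤ TLaux.Tr E p pw lt L := by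
        rw [hTr₁, hTr₀]
        exact hmin₁ q₀ hq₀F.1 le_rfl
      have hstrict := TLaux.Tr_strict E p pw lt hE hp hp1 hpw0 hpw1 hlt hne hLmax
        hL0ge hlt' hL.2
      linarith
  · -- constancy above LMax
    intro L hL
    have h := TLaux.TL_const E p pw lt hp hne (L := L) (le_trans (le_of_eq hLM.symm) hL)
    rw [hLM]
    exact h
end
end

section
/- (Validity of the multiplier update strategy.) Suppose s^{(n)} is chosen by: if G_{r^{(n-1)}}(0) ≤ L set s^{(n)} = 0; otherwise take s^{(n)} ≥ 0 solving G_{r^{(n-1)}}(s) = L, where G_r(s) = Loss(q_s*(r)). Then for every optimal solution (q⁰, r⁰) of the constrained problem min_{Loss(q)≤L} GD_E(q||r) with associated KKT multiplier s* (so that s* ≥ 0, and either L ≤ L_max with Loss(q⁰) = L, or L > L_max with s* = 0 and Loss(q⁰) ≤ L), the discriminant Δ_n(q⁰) = (s^{(n)} − s*)(Loss(q^{(n)}) − Loss(q⁰)) is nonnegative, where q^{(n)} = q_{s^{(n)}}*(r^{(n-1)}) so that Loss(q^{(n)}) = G_{r^{(n-1)}}(s^{(n)}). -/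
open Real

noncomputable section

variable {V U W : Type*} [Fintype V] [Fintype U] [Fintype W]
  [DecidableEq V] [DecidableEq U]

/-- validity of the multiplier update strategy — the chosen `s⁽ⁿ⁾`
makes the discriminant `Δ_n(q⁰) = (s⁽ⁿ⁾ − s*)(Loss(q⁽ⁿ⁾) − Loss(q⁰))` nonnegative
for every KKT-optimal `(q⁰, s*)`. -/
theorem multiplier_strategy_valid
    (E : Finset (V × U)) (hE : ∀ v : V, ∃ u, (v, u) ∈ E)
    (p : V → ℝ) (hp : ∀ v, 0 < p v) (hp1 : ∑ v, p v = 1)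
    (pw : V → U → W → ℝ) (hpw0 : ∀ v u w, 0 ≤ pw v u w)
    (hpw1 : ∀ v u, (v, u) ∈ E → ∑ w, pw v u w = 1)
    (lt : V → U → ℝ) (hlt : ∀ v u, 0 ≤ lt v u)
    (L Lmax : ℝ)
    -- the previous iterate r^{(n-1)}
    (r : W → U → ℝ)
    -- the multiplier s^{(n)} chosen by the strategy, where
    -- G_r(s) = Loss(q_s^*(r))
    (sn : ℝ)
    (hsn : (LossE E p lt (qstar E pw lt 0 r) ≤ L ∧ sn = 0)
      ∨ (L < LossE E p lt (qstar E pw lt 0 r) ∧ 0 ≤ sn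
          ∧ LossE E p lt (qstar E pw lt sn r) = L))
    -- an optimal solution q⁰ with KKT multiplier s*
    (q0 : V → U → ℝ) (hq0 : CondDistOn E q0)
    (sstar : ℝ) (hsstar : 0 ≤ sstar)
    (hKKT : (L ≤ Lmax ∧ LossE E p lt q0 = L)
      ∨ (Lmax < L ∧ sstar = 0 ∧ LossE E p lt q0 ≤ L)) :
    0 ≤ (sn - sstar) * (LossE E p lt (qstar E pw lt sn r) - LossE E p lt q0) := by
  rcases hsn with ⟨h1, h2⟩ | ⟨h1, h2, h3⟩ <;>
      rcases hKKT with ⟨k1, k2⟩ | ⟨k1, k2, k3⟩ <;> subst_vars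
  · nlinarith [mul_nonneg hsstar (sub_nonneg.2 h1)]
  · nlinarith
  · nlinarith
  · nlinarith [mul_nonneg h2 (sub_nonneg.2 k3)]
end
end
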